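/- arXiv:2601.17311 — 3 statements merged into one kernel-verified Lean document; each statement's English description precedes it below -/
import Mathlib

section
/- For an odd integer b = 2k+1 with k ≥ 1, the majority map f_b is differentiable on (-1,1) with f_b'(u) = ((2k+1) · C(2k, k) / 4^k) · (1-u^2)^k for all u ∈ (-1,1); in particular f_b'(0) = b · C(b-1, (b-1)/2) / 2^{b-1}, the derivative f_b' is strictly decreasing on (0,1), and f_b is concave on [0,1] (strictly concave on (0,1)). -/
open Finset

/-- The upper binomial tail `F(p) = ∑_{j=k+1}^{2k+1} C(2k+1,j) p^j (1-p)^{2k+1-j}`. -/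
noncomputable def majF (k : ℕ) (p : ℝ) : ℝ :=
  ∑ j ∈ Finset.Icc (k + 1) (2 * k + 1),
    (Nat.choose (2 * k + 1) j : ℝ) * p ^ j * (1 - p) ^ (2 * k + 1 - j)

/-- The majority map `f_b(u) = 2 F((1+u)/2) - 1` for odd fan-in `b = 2k+1`. -/
noncomputable def majMap (k : ℕ) (u : ℝ) : ℝ :=
  2 * majF k ((1 + u) / 2) - 1

/-- The closed-form derivative of the majority map:
`f_b'(u) = ((2k+1) C(2k,k) / 4^k) (1-u²)^k`. -/
noncomputable def majMapDeriv (k : ℕ) (u : ℝ) : ℝ :=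
  ((2 * k + 1 : ℝ) * (Nat.choose (2 * k) k : ℝ) / 4 ^ k) * (1 - u ^ 2) ^ k

/-- Derivative of one Bernstein-type term. -/
lemma hasDerivAt_term (n j : ℕ) (c p : ℝ) :
    HasDerivAt (fun q : ℝ => c * q ^ j * (1 - q) ^ (n - j))
      (c * ((j : ℝ) * p ^ (j - 1) * (1 - p) ^ (n - j)
        - ((n - j : ℕ) : ℝ) * p ^ j * (1 - p) ^ (n - j - 1))) p := by
  have h1 : HasDerivAt (fun q : ℝ => c * q ^ j) (c * ((j : ℝ) * p ^ (j - 1))) p :=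
    (hasDerivAt_pow j p).const_mul c
  have h2 : HasDerivAt (fun q : ℝ => (1 - q) ^ (n - j))
      (((n - j : ℕ) : ℝ) * (1 - p) ^ (n - j - 1) * (-1)) p := by
    have hs : HasDerivAt (fun q : ℝ => 1 - q) (-1) p := (hasDerivAt_id p).const_sub 1
    exact (hasDerivAt_pow (n - j) (1 - p)).comp p hs
  have := h1.fun_mul h2
  exact this.congr_deriv (by ring)

/-- Nat identity A: `(m+1) C(2k+1, m+1) = (2k+1) C(2k, m)`. -/
lemma identA (k m : ℕ) :
    (Nat.choose (2 * k + 1) (m + 1)) * (m + 1) = (2 * k + 1) * Nat.choose (2 * k) m := by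
  rw [← Nat.add_one_mul_choose_eq]

/-- Nat identity B: `(2k-m) C(2k+1, m+1) = (2k+1) C(2k, m+1)`. -/
lemma identB (k m : ℕ) :
    (Nat.choose (2 * k + 1) (m + 1)) * (2 * k - m) = (2 * k + 1) * Nat.choose (2 * k) (m + 1) := by
  have h1 := Nat.choose_succ_right_eq (2 * k + 1) (m + 1)
  have h2 := Nat.add_one_mul_choose_eq (2 * k) (m + 1)
  have h3 : 2 * k + 1 - (m + 1) = 2 * k - m := by omega
  rw [h3] at h1
  rw [← h1, h2]

/-- The derivative of the binomial tail. -/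
lemma hasDerivAt_majF (k : ℕ) (p : ℝ) :
    HasDerivAt (majF k)
      ((2 * k + 1 : ℝ) * (Nat.choose (2 * k) k : ℝ) * (p ^ k * (1 - p) ^ k)) p := by
  -- h i : the telescoping sequence
  set h : ℕ → ℝ := fun i =>
    (2 * k + 1 : ℝ) * (Nat.choose (2 * k) i : ℝ) * p ^ i * (1 - p) ^ (2 * k - i) with hh
  have H : HasDerivAt (majF k)
      (∑ j ∈ Finset.Icc (k + 1) (2 * k + 1),
        (Nat.choose (2 * k + 1) j : ℝ) *
          ((j : ℝ) * p ^ (j - 1) * (1 - p) ^ (2 * k + 1 - j)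
            - ((2 * k + 1 - j : ℕ) : ℝ) * p ^ j * (1 - p) ^ (2 * k + 1 - j - 1))) p := by
    unfold majF
    exact HasDerivAt.fun_sum fun j _ => hasDerivAt_term (2 * k + 1) j _ p
  convert H using 1
  have key : ∀ m : ℕ,
      (Nat.choose (2 * k + 1) (m + 1) : ℝ) *
        (((m + 1 : ℕ) : ℝ) * p ^ m * (1 - p) ^ (2 * k + 1 - (m + 1))
          - ((2 * k + 1 - (m + 1) : ℕ) : ℝ) * p ^ (m + 1) * (1 - p) ^ (2 * k + 1 - (m + 1) - 1))
      = h m - h (m + 1) := by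
    intro m
    have e1 : 2 * k + 1 - (m + 1) = 2 * k - m := by omega
    have e2 : 2 * k + 1 - (m + 1) - 1 = 2 * k - (m + 1) := by omega
    rw [e2, e1]
    have A : ((Nat.choose (2 * k + 1) (m + 1)) * (m + 1) : ℝ)
        = ((2 * k + 1) * Nat.choose (2 * k) m : ℝ) := by
      exact_mod_cast congrArg (Nat.cast : ℕ → ℝ) (identA k m)
    have B : ((Nat.choose (2 * k + 1) (m + 1)) * (2 * k - m : ℕ) : ℝ)
        = ((2 * k + 1) * Nat.choose (2 * k) (m + 1) : ℝ) := by
      exact_mod_cast congrArg (Nat.cast : ℕ → ℝ) (identB k m)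
    simp only [hh]
    push_cast at A B ⊢
    linear_combination (p ^ m * (1 - p) ^ (2 * k - m)) * A
      - (p ^ (m + 1) * (1 - p) ^ (2 * k - (m + 1))) * B
  rw [show Finset.Icc (k + 1) (2 * k + 1) = Finset.Ico (k + 1) (2 * k + 2) by
        rw [← Finset.Ico_add_one_right_eq_Icc]; rfl,
      Finset.sum_Ico_eq_sum_range]
  have e : 2 * k + 2 - (k + 1) = k + 1 := by omega
  rw [e]
  have : ∀ i ∈ Finset.range (k + 1),
      (Nat.choose (2 * k + 1) (k + 1 + i) : ℝ) *
        (((k + 1 + i : ℕ) : ℝ) * p ^ (k + 1 + i - 1) * (1 - p) ^ (2 * k + 1 - (k + 1 + i))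
          - ((2 * k + 1 - (k + 1 + i) : ℕ) : ℝ) * p ^ (k + 1 + i) *
            (1 - p) ^ (2 * k + 1 - (k + 1 + i) - 1))
      = h (k + i) - h (k + i + 1) := by
    intro i _
    have := key (k + i)
    have e3 : k + 1 + i = (k + i) + 1 := by omega
    rw [e3]
    simpa using this
  rw [Finset.sum_congr rfl this]
  have tele : ∑ i ∈ Finset.range (k + 1), (h (k + i) - h (k + i + 1))
      = h k - h (k + (k + 1)) := by
    simpa [add_assoc] using Finset.sum_range_sub' (fun i => h (k + i)) (k + 1)
  rw [tele]
  have hz : h (k + (k + 1)) = 0 := by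
    simp only [hh]
    have : Nat.choose (2 * k) (k + (k + 1)) = 0 := Nat.choose_eq_zero_of_lt (by omega)
    rw [this]
    simp
  rw [hz]
  simp only [hh, Nat.add_zero, Nat.sub_self]
  have : 2 * k - k = k := by omega
  rw [this]
  ring

lemma hasDerivAt_majMap (k : ℕ) (u : ℝ) :
    HasDerivAt (majMap k) (majMapDeriv k u) u := by
  have hin : HasDerivAt (fun u : ℝ => (1 + u) / 2) (1 / 2) u := by
    have : HasDerivAt (fun u : ℝ => 1 + u) 1 u := (hasDerivAt_id u).const_add 1
    simpa using this.div_const 2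
  have hF := (hasDerivAt_majF k ((1 + u) / 2)).comp u hin
  have : HasDerivAt (majMap k)
      (2 * (((2 * k + 1 : ℝ) * (Nat.choose (2 * k) k : ℝ) *
        (((1 + u) / 2) ^ k * (1 - (1 + u) / 2) ^ k)) * (1 / 2))) u := by
    unfold majMap
    exact ((hF.const_mul 2).sub_const 1)
  convert this using 1
  unfold majMapDeriv
  have h1 : (1 : ℝ) - (1 + u) / 2 = (1 - u) / 2 := by ring
  rw [h1]
  have h2 : ((1 + u) / 2) ^ k * ((1 - u) / 2) ^ k = ((1 - u ^ 2) / 4) ^ k := by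
    rw [← mul_pow]; congr 1; ring
  rw [h2, div_pow]
  field_simp

/-- The majority map is differentiable on `(-1,1)` with the stated closed-form
derivative; at the origin the derivative is `b C(b-1,(b-1)/2)/2^{b-1}` with `b = 2k+1`;
the derivative is strictly decreasing on `(0,1)`; and `f_b` is concave on `[0,1]`
(strictly concave on `(0,1)`). -/
theorem majMap_deriv_concave (k : ℕ) (hk : 1 ≤ k) :
    (∀ u ∈ Set.Ioo (-1 : ℝ) 1, HasDerivAt (majMap k) (majMapDeriv k u) u) ∧
    majMapDeriv k 0 =
      ((2 * k + 1 : ℝ) * (Nat.choose (2 * k + 1 - 1) ((2 * k + 1 - 1) / 2) : ℝ)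
        / 2 ^ (2 * k + 1 - 1)) ∧
    StrictAntiOn (majMapDeriv k) (Set.Ioo (0 : ℝ) 1) ∧
    ConcaveOn ℝ (Set.Icc (0 : ℝ) 1) (majMap k) ∧
    StrictConcaveOn ℝ (Set.Ioo (0 : ℝ) 1) (majMap k) := by
  have hderiv : ∀ u : ℝ, HasDerivAt (majMap k) (majMapDeriv k u) u := hasDerivAt_majMap k
  have hcpos : (0 : ℝ) < (2 * k + 1 : ℝ) * (Nat.choose (2 * k) k : ℝ) / 4 ^ k := by
    apply div_pos
    · apply mul_pos
      · positivity
      · exact_mod_cast Nat.cast_pos.mpr (Nat.choose_pos (by omega))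
    · positivity
  have hanti : StrictAntiOn (majMapDeriv k) (Set.Ioo (0 : ℝ) 1) := by
    intro x hx y hy hxy
    unfold majMapDeriv
    apply mul_lt_mul_of_pos_left _ hcpos
    apply pow_lt_pow_left₀ _ _ (by omega : k ≠ 0)
    · nlinarith [hx.1, hx.2, hy.1, hy.2]
    · nlinarith [hy.1, hy.2]
  have hderiveq : deriv (majMap k) = majMapDeriv k := by
    funext u; exact (hderiv u).deriv
  refine ⟨fun u _ => hderiv u, ?_, hanti, ?_, ?_⟩
  · unfold majMapDeriv
    have e : (2 * k + 1 - 1).choose ((2 * k + 1 - 1) / 2) = (2 * k).choose k := by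
      congr 1; omega
    have e' : 2 * k + 1 - 1 = 2 * k := by omega
    have e3 : (2 : ℝ) ^ (2 * k) = 4 ^ k := by
      rw [pow_mul]; norm_num
    rw [e, e', e3]
    norm_num
  · apply AntitoneOn.concaveOn_of_deriv (convex_Icc 0 1)
    · exact fun u _ => ((hderiv u).differentiableAt).continuousAt.continuousWithinAt
    · rw [interior_Icc]
      exact fun u _ => ((hderiv u).differentiableAt).differentiableWithinAt
    · rw [interior_Icc, hderiveq]
      exact hanti.antitoneOn
  · apply StrictAntiOn.strictConcaveOn_of_deriv (convex_Ioo 0 1)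
    · exact fun u _ => ((hderiv u).differentiableAt).continuousAt.continuousWithinAt
    · rw [interior_Ioo, hderiveq]
      exact hanti
end

section
/- For an odd integer b = 2k+1 with k ≥ 1, the majority map f_b satisfies f_b(u) ≥ u for all u ∈ [0,1], with strict inequality f_b(u) > u for all u ∈ (0,1). -/
open Finset

private lemma maj_choose1 (k i : ℕ) :
    ((2 * k + 1).choose (i + 1) : ℝ) * (i + 1) = (2 * k + 1) * ((2 * k).choose i) := by
  have := Nat.add_one_mul_choose_eq (2 * k) i
  exact_mod_cast congrArg (Nat.cast (R := ℝ)) this.symm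

private lemma maj_choose2 (k i : ℕ) (hi : i + 1 ≤ 2 * k + 1) :
    ((2 * k + 1).choose (i + 1) : ℝ) * ((2 * k) - i) = (2 * k + 1) * ((2 * k).choose (i + 1)) := by
  have h1 := Nat.choose_succ_right_eq (2 * k + 1) (i + 1)
  have h2 := Nat.add_one_mul_choose_eq (2 * k) (i + 1)
  have h3 : (2 * k + 1).choose (i + 1) * (2 * k + 1 - (i + 1)) = (2 * k + 1) * (2 * k).choose (i + 1) := by
    rw [← h1, ← h2]
  have h4 : ((2 * k + 1).choose (i + 1) : ℝ) * ((2 * k + 1 - (i + 1) : ℕ) : ℝ)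
      = (2 * k + 1) * ((2 * k).choose (i + 1)) := by exact_mod_cast congrArg (Nat.cast (R := ℝ)) h3
  have e : ((2 * k + 1 - (i + 1) : ℕ) : ℝ) = (2 * k : ℝ) - i := by
    have : 2 * k + 1 - (i + 1) = 2 * k - i := by omega
    rw [this, Nat.cast_sub (by omega)]; push_cast; ring
  rwa [e] at h4

private lemma maj_term_hasDerivAt (k : ℕ) (p : ℝ) {j : ℕ}
    (hj : j ∈ Finset.Icc (k + 1) (2 * k + 1)) :
    HasDerivAt (fun p : ℝ => ((2 * k + 1).choose j : ℝ) * p ^ j * (1 - p) ^ (2 * k + 1 - j))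
      ((2 * k + 1) * ((2 * k).choose (j - 1)) * p ^ (j - 1) * (1 - p) ^ (2 * k - (j - 1))
        - (2 * k + 1) * ((2 * k).choose j) * p ^ j * (1 - p) ^ (2 * k - j)) p := by
  simp only [Finset.mem_Icc] at hj
  obtain ⟨i, rfl⟩ : ∃ i, j = i + 1 := ⟨j - 1, by omega⟩
  have h1 : HasDerivAt (fun p : ℝ => p ^ (i + 1)) (((i : ℝ) + 1) * p ^ i) p := by
    simpa using hasDerivAt_pow (i + 1) p
  have hlin : HasDerivAt (fun p : ℝ => 1 - p) (-1) p := by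
    simpa using (hasDerivAt_id p).const_sub 1
  have h2 : HasDerivAt (fun p : ℝ => (1 - p) ^ (2 * k + 1 - (i + 1)))
      (((2 * k + 1 - (i + 1) : ℕ) : ℝ) * (1 - p) ^ (2 * k + 1 - (i + 1) - 1) * (-1)) p :=
    hlin.pow _
  have h := (h1.fun_mul h2).const_mul ((2 * k + 1).choose (i + 1) : ℝ)
  have hfun : (fun p : ℝ => ((2 * k + 1).choose (i + 1) : ℝ) * p ^ (i + 1) * (1 - p) ^ (2 * k + 1 - (i + 1)))
      = fun p : ℝ => ((2 * k + 1).choose (i + 1) : ℝ) * (p ^ (i + 1) * (1 - p) ^ (2 * k + 1 - (i + 1))) := by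
    funext p; ring
  rw [hfun]
  refine h.congr_deriv (Eq.symm ?_)
  have e1 : 2 * k + 1 - (i + 1) = 2 * k - i := by omega
  have e2 : 2 * k - i - 1 = 2 * k - (i + 1) := by omega
  have e3 : ((2 * k - i : ℕ) : ℝ) = (2 * k : ℝ) - i := by
    rw [Nat.cast_sub (by omega)]; push_cast; ring
  have c1 := maj_choose1 k i
  have c2 := maj_choose2 k i (by omega)
  simp only [Nat.add_sub_cancel, e1, e2, e3]
  rcases Nat.lt_or_ge i (2 * k) with hlt | hge
  · have e4 : 2 * k - i = (2 * k - (i + 1)) + 1 := by omega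
    rw [e4, pow_succ]
    linear_combination (-(p ^ i * ((1 - p) ^ (2 * k - (i + 1)) * (1 - p)))) * c1
      + (p ^ (i + 1) * (1 - p) ^ (2 * k - (i + 1))) * c2
  · have hik : i = 2 * k := by omega
    subst hik
    simp only [Nat.choose_self, Nat.choose_succ_self, Nat.cast_zero, Nat.cast_one,
      Nat.sub_self, pow_zero]
    push_cast
    ring


private lemma majF_hasDerivAt (k : ℕ) (p : ℝ) :
    HasDerivAt (majF k)
      ((2 * k + 1) * ((2 * k).choose k) * (p ^ k * (1 - p) ^ k)) p := by
  have H : HasDerivAt (fun p : ℝ => ∑ j ∈ Finset.Icc (k + 1) (2 * k + 1),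
      ((2 * k + 1).choose j : ℝ) * p ^ j * (1 - p) ^ (2 * k + 1 - j))
      (∑ j ∈ Finset.Icc (k + 1) (2 * k + 1),
        ((2 * k + 1) * ((2 * k).choose (j - 1)) * p ^ (j - 1) * (1 - p) ^ (2 * k - (j - 1))
          - (2 * k + 1) * ((2 * k).choose j) * p ^ j * (1 - p) ^ (2 * k - j))) p :=
    HasDerivAt.fun_sum (fun j hj => maj_term_hasDerivAt k p hj)
  have hsum : (∑ j ∈ Finset.Icc (k + 1) (2 * k + 1),
      ((2 * k + 1) * ((2 * k).choose (j - 1)) * p ^ (j - 1) * (1 - p) ^ (2 * k - (j - 1))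
        - (2 * k + 1) * ((2 * k).choose j) * p ^ j * (1 - p) ^ (2 * k - j)))
      = (2 * k + 1) * ((2 * k).choose k) * (p ^ k * (1 - p) ^ k) := by
    set G : ℕ → ℝ := fun j => (2 * k + 1) * ((2 * k).choose j) * p ^ j * (1 - p) ^ (2 * k - j)
      with hG
    have : (∑ j ∈ Finset.Icc (k + 1) (2 * k + 1), (G (j - 1) - G j)) = G k - G (2 * k + 1) := by
      rw [← Finset.Ico_add_one_right_eq_Icc, Finset.sum_Ico_eq_sum_range]
      have hn : 2 * k + 1 + 1 - (k + 1) = k + 1 := by omega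
      rw [hn]
      have : ∀ i, G (k + 1 + i - 1) - G (k + 1 + i) = (fun i => G (k + i)) i - (fun i => G (k + i)) (i + 1) := by
        intro i
        simp only []
        congr 2
        · omega
        · omega
      calc (∑ i ∈ Finset.range (k + 1), (G (k + 1 + i - 1) - G (k + 1 + i)))
          = ∑ i ∈ Finset.range (k + 1), ((fun i => G (k + i)) i - (fun i => G (k + i)) (i + 1)) := by
            exact Finset.sum_congr rfl (fun i _ => this i)
        _ = G (k + 0) - G (k + (k + 1)) := Finset.sum_range_sub' (fun i => G (k + i)) (k + 1)
        _ = G k - G (2 * k + 1) := by congr 2 <;> omega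
    rw [this, hG]
    simp only []
    have hz : (2 * k).choose (2 * k + 1) = 0 := Nat.choose_eq_zero_of_lt (by omega)
    rw [hz]
    have h2 : 2 * k - k = k := by omega
    rw [h2]
    push_cast
    ring
  rw [← hsum]
  exact H


private lemma majF_half (k : ℕ) : majF k (1 / 2 : ℝ) = 1 / 2 := by
  have hsum : ∑ j ∈ Finset.Icc (k + 1) (2 * k + 1), (2 * k + 1).choose j = 4 ^ k := by
    have h1 : ∑ j ∈ Finset.range (2 * k + 2), (2 * k + 1).choose j = 2 ^ (2 * k + 1) := by
      have := Nat.sum_range_choose (2 * k + 1)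
      simpa using this
    have h2 : ∑ j ∈ Finset.range (k + 1), (2 * k + 1).choose j = 4 ^ k :=
      Nat.sum_range_choose_halfway k
    have h3 := Finset.sum_Ico_consecutive (fun j => (2 * k + 1).choose j)
      (Nat.zero_le (k + 1)) (by omega : k + 1 ≤ 2 * k + 2)
    rw [← Finset.Ico_add_one_right_eq_Icc]
    have hr1 : Finset.range (k + 1) = Finset.Ico 0 (k + 1) := by rw [Finset.range_eq_Ico]
    have hr2 : Finset.range (2 * k + 2) = Finset.Ico 0 (2 * k + 2) := by rw [Finset.range_eq_Ico]
    rw [hr1] at h2; rw [hr2] at h1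
    have h4 : 2 ^ (2 * k + 1) = 2 * 4 ^ k := by
      rw [pow_succ, pow_mul]; ring
    have e : 2 * k + 1 + 1 = 2 * k + 2 := by omega
    rw [e]
    beta_reduce at h3
    omega
  unfold majF
  have hterm : ∀ j ∈ Finset.Icc (k + 1) (2 * k + 1),
      ((2 * k + 1).choose j : ℝ) * (1 / 2 : ℝ) ^ j * (1 - 1 / 2 : ℝ) ^ (2 * k + 1 - j)
        = ((2 * k + 1).choose j : ℝ) * (1 / 2 : ℝ) ^ (2 * k + 1) := by
    intro j hj
    simp only [Finset.mem_Icc] at hj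
    have : (1 / 2 : ℝ) ^ j * (1 / 2 : ℝ) ^ (2 * k + 1 - j) = (1 / 2 : ℝ) ^ (2 * k + 1) := by
      rw [← pow_add]
      congr 1
      omega
    rw [show (1 - 1 / 2 : ℝ) = 1 / 2 by norm_num, mul_assoc, this]
  rw [Finset.sum_congr rfl hterm, ← Finset.sum_mul]
  have : (∑ j ∈ Finset.Icc (k + 1) (2 * k + 1), ((2 * k + 1).choose j : ℝ)) = (4 : ℝ) ^ k := by
    exact_mod_cast congrArg (Nat.cast (R := ℝ)) hsum
  rw [this]
  rw [show (4 : ℝ) = 2 ^ 2 by norm_num, ← pow_mul,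
    show (1 / 2 : ℝ) = 2⁻¹ by norm_num, inv_pow, pow_succ]
  have h2k : (2 : ℝ) ^ (2 * k) ≠ 0 := by positivity
  field_simp

private lemma majF_one (k : ℕ) : majF k (1 : ℝ) = 1 := by
  unfold majF
  rw [Finset.sum_eq_single (2 * k + 1)]
  · simp
  · intro j hj hne
    simp only [Finset.mem_Icc] at hj
    have : (1 - 1 : ℝ) ^ (2 * k + 1 - j) = 0 := by
      rw [sub_self]
      exact zero_pow (by omega)
    rw [this, mul_zero]
  · intro h
    exact absurd (Finset.mem_Icc.mpr ⟨by omega, le_refl _⟩) h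


private lemma majF_gt (k : ℕ) (hk : 1 ≤ k) {p : ℝ} (hp : p ∈ Set.Ioo (1 / 2 : ℝ) 1) :
    p < majF k p := by
  obtain ⟨hp1, hp2⟩ := hp
  set c : ℝ := (2 * k + 1) * ((2 * k).choose k) with hc
  have hchoose : 0 < (2 * k).choose k := Nat.choose_pos (by omega)
  have hcpos : (0 : ℝ) < c := by
    rw [hc]
    have : (0 : ℝ) < ((2 * k).choose k : ℝ) := by exact_mod_cast hchoose
    positivity
  set h : ℝ → ℝ := fun q => majF k q - q with hh
  have hderiv : ∀ q : ℝ, HasDerivAt h (c * (q ^ k * (1 - q) ^ k) - 1) q := by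
    intro q
    simpa [hh, Pi.sub_def] using (majF_hasDerivAt k q).sub (hasDerivAt_id q)
  by_contra hcon
  push_neg at hcon
  have hhp : h p ≤ 0 := by simp only [hh]; linarith
  have h0 : h (1 / 2) = 0 := by simp only [hh]; rw [majF_half]; ring
  have h1 : h 1 = 0 := by simp only [hh]; rw [majF_one]; ring
  obtain ⟨ξ1, hξ1, hs1⟩ := exists_hasDerivAt_eq_slope h
    (fun q => c * (q ^ k * (1 - q) ^ k) - 1) hp1
    (fun x _ => (hderiv x).continuousAt.continuousWithinAt) (fun x _ => hderiv x)
  obtain ⟨ξ2, hξ2, hs2⟩ := exists_hasDerivAt_eq_slope h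
    (fun q => c * (q ^ k * (1 - q) ^ k) - 1) hp2
    (fun x _ => (hderiv x).continuousAt.continuousWithinAt) (fun x _ => hderiv x)
  rw [h0] at hs1
  rw [h1] at hs2
  have hd1 : (c * (ξ1 ^ k * (1 - ξ1) ^ k) - 1) * (p - 1 / 2) = h p - 0 := by
    rw [hs1, div_mul_cancel₀]
    linarith
  have hd2 : (c * (ξ2 ^ k * (1 - ξ2) ^ k) - 1) * (1 - p) = 0 - h p := by
    rw [hs2, div_mul_cancel₀]
    linarith
  have hD1 : c * (ξ1 ^ k * (1 - ξ1) ^ k) - 1 ≤ 0 := by nlinarith [hξ1.1, hξ1.2]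
  have hD2 : 0 ≤ c * (ξ2 ^ k * (1 - ξ2) ^ k) - 1 := by nlinarith [hξ2.1, hξ2.2]
  have hξ11 : 1 / 2 < ξ1 := hξ1.1
  have hξ12 : ξ1 < p := hξ1.2
  have hξ21 : p < ξ2 := hξ2.1
  have hξ22 : ξ2 < 1 := hξ2.2
  have key : ξ2 * (1 - ξ2) < ξ1 * (1 - ξ1) := by nlinarith
  have hpow : (ξ2 * (1 - ξ2)) ^ k < (ξ1 * (1 - ξ1)) ^ k :=
    pow_lt_pow_left₀ key (by nlinarith) (by omega)
  rw [mul_pow, mul_pow] at hpow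
  nlinarith

/-- Majority improves independent votes: `f_b(u) ≥ u` on `[0,1]`, strictly on `(0,1)`. -/
theorem majMap_ge_id (k : ℕ) (hk : 1 ≤ k) :
    (∀ u ∈ Set.Icc (0 : ℝ) 1, u ≤ majMap k u) ∧
    (∀ u ∈ Set.Ioo (0 : ℝ) 1, u < majMap k u) := by
  have strict : ∀ u ∈ Set.Ioo (0 : ℝ) 1, u < majMap k u := by
    intro u hu
    have hp : (1 + u) / 2 ∈ Set.Ioo (1 / 2 : ℝ) 1 := by
      constructor <;> [linarith [hu.1]; linarith [hu.2]]
    have := majF_gt k hk hp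
    unfold majMap
    linarith
  refine ⟨fun u hu => ?_, strict⟩
  rcases eq_or_lt_of_le hu.1 with h0 | h0
  · rw [← h0]
    unfold majMap
    rw [show (1 + (0 : ℝ)) / 2 = 1 / 2 by norm_num, majF_half]
    norm_num
  rcases eq_or_lt_of_le hu.2 with h1 | h1
  · rw [h1]
    unfold majMap
    rw [show (1 + (1 : ℝ)) / 2 = 1 by norm_num, majF_one]
    norm_num
  · exact le_of_lt (strict u ⟨h0, h1⟩)
end

section
/- Let (Ω, 𝒫) be a probability space carrying random variables Y (values in a measurable space 𝒴), X (values in a measurable space 𝒳), and U (values in a measurable space 𝒰), with U independent of the pair (X, Y). Let g : 𝒳 × 𝒰 → 𝒵 be measurable and set Z = g(X, U). Let ℓ : 𝒴' × 𝒴 → [0, ∞) be a bounded measurable loss, where predictions take values in a measurable space 𝒴'. Then for every measurable φ : 𝒵 → 𝒴', E[ℓ(φ(Z), Y)] ≥ inf over measurable ψ : 𝒳 → 𝒴' of E[ℓ(ψ(X), Y)]. -/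
open MeasureTheory ProbabilityTheory

/-- Centralization dominates under unlimited context: if the root only observes
`Z = g(X, U)` where `U` is protocol randomness independent of `(X, Y)`, then the risk
of any decision rule `φ(Z)` is at least the infimum of the risks of decision rules
`ψ(X)` that see all leaf messages `X` directly. -/
theorem centralization_dominates
    {Ω 𝒴 𝒳 𝒰 𝒵 𝒴' : Type*}
    [MeasurableSpace Ω] [MeasurableSpace 𝒴] [MeasurableSpace 𝒳]
    [MeasurableSpace 𝒰] [MeasurableSpace 𝒵] [MeasurableSpace 𝒴']
    (μ : Measure Ω) [IsProbabilityMeasure μ]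
    (Y : Ω → 𝒴) (X : Ω → 𝒳) (U : Ω → 𝒰)
    (hY : Measurable Y) (hX : Measurable X) (hU : Measurable U)
    (hindep : IndepFun U (fun ω => (X ω, Y ω)) μ)
    (g : 𝒳 × 𝒰 → 𝒵) (hg : Measurable g)
    (ℓ : 𝒴' × 𝒴 → ℝ) (hℓmeas : Measurable ℓ)
    (hℓnonneg : ∀ y' y, 0 ≤ ℓ (y', y))
    (Cb : ℝ) (hℓbdd : ∀ y' y, ℓ (y', y) ≤ Cb)
    (φ : 𝒵 → 𝒴') (hφ : Measurable φ) :
    sInf {r : ℝ | ∃ ψ : 𝒳 → 𝒴', Measurable ψ ∧ r = ∫ ω, ℓ (ψ (X ω), Y ω) ∂μ}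
      ≤ ∫ ω, ℓ (φ (g (X ω, U ω)), Y ω) ∂μ := by
  set S := {r : ℝ | ∃ ψ : 𝒳 → 𝒴', Measurable ψ ∧ r = ∫ ω, ℓ (ψ (X ω), Y ω) ∂μ} with hS
  set ν := μ.map U with hν
  set κ := μ.map (fun ω => (X ω, Y ω)) with hκ
  have hXY : Measurable fun ω => (X ω, Y ω) := hX.prodMk hY
  haveI : IsProbabilityMeasure ν := Measure.isProbabilityMeasure_map hU.aemeasurable
  haveI : IsProbabilityMeasure κ := Measure.isProbabilityMeasure_map hXY.aemeasurable
  -- the joint law of (U, (X,Y)) is product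
  have hprod : μ.map (fun ω => (U ω, (X ω, Y ω))) = ν.prod κ :=
    (indepFun_iff_map_prod_eq_prod_map_map hU.aemeasurable hXY.aemeasurable).mp hindep
  set F : 𝒰 × (𝒳 × 𝒴) → ℝ := fun p => ℓ (φ (g (p.2.1, p.1)), p.2.2) with hF
  have hFmeas : Measurable F := by
    apply hℓmeas.comp
    exact (hφ.comp (hg.comp ((measurable_fst.comp measurable_snd).prodMk
      measurable_fst))).prodMk (measurable_snd.comp measurable_snd)
  have hFint : Integrable F (ν.prod κ) := by
    refine ⟨hFmeas.aestronglyMeasurable, ?_⟩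
    apply HasFiniteIntegral.mono' (g := fun _ => Cb)
    · exact (integrable_const Cb).hasFiniteIntegral
    · refine Filter.Eventually.of_forall fun p => ?_
      rw [Real.norm_eq_abs, abs_of_nonneg (hℓnonneg _ _)]
      exact hℓbdd _ _
  -- rewrite LHS of goal's RHS via the product law
  have h1 : ∫ ω, ℓ (φ (g (X ω, U ω)), Y ω) ∂μ
      = ∫ p, F p ∂(ν.prod κ) := by
    rw [← hprod, integral_map (hU.prodMk hXY).aemeasurable hFmeas.aestronglyMeasurable]
  have h2 : ∫ p, F p ∂(ν.prod κ) = ∫ u, ∫ q, F (u, q) ∂κ ∂ν :=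
    integral_prod F hFint
  -- each slice is a risk of a rule based on X
  have hslice : ∀ u : 𝒰, (∫ q, F (u, q) ∂κ) ∈ S := by
    intro u
    refine ⟨fun x => φ (g (x, u)), hφ.comp (hg.comp (measurable_id.prodMk measurable_const)), ?_⟩
    rw [hκ]
    exact integral_map hXY.aemeasurable
      (hℓmeas.comp ((hφ.comp (hg.comp (measurable_fst.prodMk
        measurable_const))).prodMk measurable_snd)).aestronglyMeasurable
  have hbdd : BddBelow S := by
    refine ⟨0, fun r hr => ?_⟩
    obtain ⟨ψ, hψ, rfl⟩ := hr
    exact integral_nonneg fun ω => hℓnonneg _ _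
  -- sInf S ≤ each slice, hence ≤ the average
  have hInt : Integrable (fun u => ∫ q, F (u, q) ∂κ) ν := hFint.integral_prod_left
  have : sInf S ≤ ∫ u, ∫ q, F (u, q) ∂κ ∂ν := by
    calc sInf S = ∫ _, sInf S ∂ν := by simp
    _ ≤ _ := integral_mono (integrable_const _) hInt fun u => csInf_le hbdd (hslice u)
  rw [h1, h2]
  exact this
end
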